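/- arXiv:2401.13577 — 3 statements merged into one kernel-verified Lean document; each statement's English description precedes it below -/
import Mathlib

section
/- Let K be a field and let f = a0*x^4 + a1*x^3*y + a2*x^3*z + a3*x^2*y^2 + a4*x^2*y*z + a5*x^2*z^2 + a6*x*y^3 + a7*x*y^2*z + a8*x*y*z^2 + a9*x*z^3 + a10*y^4 + a11*y^3*z + a12*y^2*z^2 + a13*y*z^3 + a14*z^4 ∈ K[x,y,z] with a10 = 0, a6 = 0 and a11 ≠ 0. Then there exists a unique formal power series g ∈ K⟦X⟧ with constant coefficient 0 such that f(X, 1, g) = 0 in K⟦X⟧ (i.e., substituting x ↦ X, y ↦ 1, z ↦ g into f yields the zero power series). Moreover the coefficient of X in g is 0 and the coefficient of X^2 in g is −a3/a11. -/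
open PowerSeries

section Aux

variable {K : Type*} [Field K] (A0 A1 A2 A3 A4 : PowerSeries K)

private noncomputable def FF (g : PowerSeries K) : PowerSeries K :=
  A0 + A1 * g + A2 * g ^ 2 + A3 * g ^ 3 + A4 * g ^ 4

private noncomputable def DD (g : PowerSeries K) : PowerSeries K :=
  A1 + 2 * A2 * g + 3 * A3 * g ^ 2 + 4 * A4 * g ^ 3

private noncomputable def newton : ℕ → PowerSeries K
  | 0 => 0
  | n + 1 => newton n + -(FF A0 A1 A2 A3 A4 (newton n)) * (DD A1 A2 A3 A4 (newton n))⁻¹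

private lemma FF_diff (g h : PowerSeries K) :
    FF A0 A1 A2 A3 A4 g - FF A0 A1 A2 A3 A4 h =
      (g - h) * (A1 + A2 * (g + h) + A3 * (g ^ 2 + g * h + h ^ 2) +
        A4 * (g ^ 3 + g ^ 2 * h + g * h ^ 2 + h ^ 3)) := by
  simp only [FF]; ring

private lemma FF_taylor (g e : PowerSeries K) :
    FF A0 A1 A2 A3 A4 (g + e) = FF A0 A1 A2 A3 A4 g + e * DD A1 A2 A3 A4 g +
      e ^ 2 * (A2 + A3 * (3 * g + e) + A4 * (6 * g ^ 2 + 4 * g * e + e ^ 2)) := by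
  simp only [FF, DD]; ring

private lemma DD_const (g : PowerSeries K) (hg : constantCoeff g = 0) :
    constantCoeff (DD A1 A2 A3 A4 g) = constantCoeff A1 := by
  simp [DD, hg]

variable (h1 : constantCoeff A1 ≠ 0) (h00 : coeff 0 A0 = 0) (h01 : coeff 1 A0 = 0)

include h1 h00 in
private lemma newton_inv (n : ℕ) :
    constantCoeff (newton A0 A1 A2 A3 A4 n) = 0 ∧
      (X : PowerSeries K) ^ (n + 1) ∣ FF A0 A1 A2 A3 A4 (newton A0 A1 A2 A3 A4 n) := by
  induction n with
  | zero =>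
    refine ⟨rfl, ?_⟩
    rw [show newton A0 A1 A2 A3 A4 0 = 0 from rfl,
      show FF A0 A1 A2 A3 A4 (0 : PowerSeries K) = A0 by simp [FF],
      pow_one, X_dvd_iff, ← coeff_zero_eq_constantCoeff_apply]
    exact h00
  | succ n ih =>
    obtain ⟨ih0, ihd⟩ := ih
    set p := newton A0 A1 A2 A3 A4 n with hp
    set e := -(FF A0 A1 A2 A3 A4 p) * (DD A1 A2 A3 A4 p)⁻¹ with he
    have hne : newton A0 A1 A2 A3 A4 (n + 1) = p + e := rfl
    have hed : (X : PowerSeries K) ^ (n + 1) ∣ e := (dvd_neg.mpr ihd).mul_right _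
    have he0 : constantCoeff e = 0 := by
      rw [← coeff_zero_eq_constantCoeff_apply]
      exact (X_pow_dvd_iff.mp hed) 0 (Nat.succ_pos n)
    constructor
    · rw [hne, map_add, ih0, he0, add_zero]
    · rw [hne, FF_taylor]
      have hD : constantCoeff (DD A1 A2 A3 A4 p) ≠ 0 := by
        rw [DD_const A1 A2 A3 A4 p ih0]; exact h1
      have hcancel : e * DD A1 A2 A3 A4 p = -(FF A0 A1 A2 A3 A4 p) := by
        rw [he, mul_assoc, mul_comm ((DD A1 A2 A3 A4 p)⁻¹),
          PowerSeries.mul_inv_cancel _ hD, mul_one]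
      rw [hcancel]
      have h2 : (X : PowerSeries K) ^ (n + 2) ∣ e ^ 2 := by
        calc (X : PowerSeries K) ^ (n + 2) ∣ X ^ (2 * (n + 1)) := pow_dvd_pow X (by omega)
        _ ∣ e ^ 2 := by rw [mul_comm, pow_mul]; exact pow_dvd_pow_of_dvd hed 2
      have : FF A0 A1 A2 A3 A4 p + -FF A0 A1 A2 A3 A4 p +
          e ^ 2 * (A2 + A3 * (3 * p + e) + A4 * (6 * p ^ 2 + 4 * p * e + e ^ 2)) =
          e ^ 2 * (A2 + A3 * (3 * p + e) + A4 * (6 * p ^ 2 + 4 * p * e + e ^ 2)) := by ring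
      rw [this]
      exact h2.mul_right _

include h1 h00 in
private lemma newton_stab : ∀ n m, m ≤ n →
    coeff m (newton A0 A1 A2 A3 A4 n) = coeff m (newton A0 A1 A2 A3 A4 m) := by
  intro n
  induction n with
  | zero => intro m hm; rw [Nat.le_zero.mp hm]
  | succ n ih =>
    intro m hm
    rcases Nat.lt_or_ge m (n + 1) with hlt | hge
    · have hmn : m ≤ n := by omega
      have hed : (X : PowerSeries K) ^ (n + 1) ∣
          -(FF A0 A1 A2 A3 A4 (newton A0 A1 A2 A3 A4 n)) *
            (DD A1 A2 A3 A4 (newton A0 A1 A2 A3 A4 n))⁻¹ :=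
        (dvd_neg.mpr (newton_inv A0 A1 A2 A3 A4 h1 h00 n).2).mul_right _
      have : newton A0 A1 A2 A3 A4 (n + 1) = newton A0 A1 A2 A3 A4 n +
          -(FF A0 A1 A2 A3 A4 (newton A0 A1 A2 A3 A4 n)) *
            (DD A1 A2 A3 A4 (newton A0 A1 A2 A3 A4 n))⁻¹ := rfl
      rw [this, map_add, X_pow_dvd_iff.mp hed m hlt, add_zero]
      exact ih m hmn
    · have : m = n + 1 := by omega
      rw [this]

include h1 h00 in
private lemma aux_exists : ∃ g : PowerSeries K, coeff 0 g = 0 ∧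
    FF A0 A1 A2 A3 A4 g = 0 := by
  set g : PowerSeries K := PowerSeries.mk fun m => coeff m (newton A0 A1 A2 A3 A4 m)
    with hgdef
  have hgco : ∀ m, coeff m g = coeff m (newton A0 A1 A2 A3 A4 m) := fun m =>
    coeff_mk m _
  refine ⟨g, ?_, ?_⟩
  · rw [hgco 0]; rw [coeff_zero_eq_constantCoeff_apply]
    exact (newton_inv A0 A1 A2 A3 A4 h1 h00 0).1
  · ext n
    have hcong : (X : PowerSeries K) ^ (n + 1) ∣ g - newton A0 A1 A2 A3 A4 n := by
      rw [X_pow_dvd_iff]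
      intro m hm
      rw [map_sub, hgco m, newton_stab A0 A1 A2 A3 A4 h1 h00 n m (by omega), sub_self]
    have hdvd : (X : PowerSeries K) ^ (n + 1) ∣ FF A0 A1 A2 A3 A4 g := by
      have := FF_diff A0 A1 A2 A3 A4 g (newton A0 A1 A2 A3 A4 n)
      have h2 : FF A0 A1 A2 A3 A4 g = FF A0 A1 A2 A3 A4 (newton A0 A1 A2 A3 A4 n) +
          (g - newton A0 A1 A2 A3 A4 n) * (A1 + A2 * (g + newton A0 A1 A2 A3 A4 n) +
            A3 * (g ^ 2 + g * newton A0 A1 A2 A3 A4 n + newton A0 A1 A2 A3 A4 n ^ 2) +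
            A4 * (g ^ 3 + g ^ 2 * newton A0 A1 A2 A3 A4 n +
              g * newton A0 A1 A2 A3 A4 n ^ 2 + newton A0 A1 A2 A3 A4 n ^ 3)) := by
        rw [← this]; ring
      rw [h2]
      exact dvd_add (newton_inv A0 A1 A2 A3 A4 h1 h00 n).2 (hcong.mul_right _)
    rw [X_pow_dvd_iff.mp hdvd n (by omega), map_zero]

include h1 in
private lemma aux_unique (g g' : PowerSeries K) (hg : coeff 0 g = 0)
    (hg' : coeff 0 g' = 0) (he : FF A0 A1 A2 A3 A4 g = 0)
    (he' : FF A0 A1 A2 A3 A4 g' = 0) : g = g' := by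
  have hd := FF_diff A0 A1 A2 A3 A4 g g'
  rw [he, he', sub_self] at hd
  have hS : constantCoeff (A1 + A2 * (g + g') + A3 * (g ^ 2 + g * g' + g' ^ 2) +
      A4 * (g ^ 3 + g ^ 2 * g' + g * g' ^ 2 + g' ^ 3)) ≠ 0 := by
    have hgc : constantCoeff g = 0 := by
      rw [← coeff_zero_eq_constantCoeff_apply]; exact hg
    have hgc' : constantCoeff g' = 0 := by
      rw [← coeff_zero_eq_constantCoeff_apply]; exact hg'
    simp [map_add, map_mul, map_pow, hgc, hgc', h1]
  rcases mul_eq_zero.mp hd.symm with h | h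
  · exact sub_eq_zero.mp h
  · exact absurd (by rw [h, map_zero]) hS

omit h00 in
include h1 h01 in
private lemma aux_coeffs (g : PowerSeries K) (hg : coeff 0 g = 0)
    (he : FF A0 A1 A2 A3 A4 g = 0) :
    coeff 1 g = 0 ∧ coeff 2 g = -(coeff 2 A0 / constantCoeff A1) := by
  have hc0 : coeff 0 A1 = constantCoeff A1 := coeff_zero_eq_constantCoeff_apply A1
  have hXg : (X : PowerSeries K) ∣ g :=
    X_dvd_iff.mpr (by rw [← coeff_zero_eq_constantCoeff_apply]; exact hg)
  have hz : ∀ (B : PowerSeries K) (k : ℕ), 2 ≤ k → ∀ m < 2, coeff m (B * g ^ k) = 0 := by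
    intro B k hk m hm
    have : (X : PowerSeries K) ^ 2 ∣ g ^ k :=
      dvd_trans (pow_dvd_pow X hk) (pow_dvd_pow_of_dvd hXg k)
    exact X_pow_dvd_iff.mp (this.mul_left B) m hm
  have e1 := congrArg (coeff 1) he
  simp only [FF, map_add, map_zero] at e1
  rw [hz A2 2 le_rfl 1 one_lt_two, hz A3 3 (by norm_num) 1 one_lt_two,
    hz A4 4 (by norm_num) 1 one_lt_two, coeff_mul,
    Finset.Nat.sum_antidiagonal_eq_sum_range_succ_mk] at e1
  simp only [Finset.sum_range_succ, Finset.sum_range_zero, zero_add] at e1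
  rw [h01] at e1
  norm_num [hg] at e1
  have hg1 : coeff 1 g = 0 := e1.resolve_left h1
  refine ⟨hg1, ?_⟩
  have hX2g : (X : PowerSeries K) ^ 2 ∣ g := by
    rw [X_pow_dvd_iff]
    intro m hm
    interval_cases m
    · exact hg
    · exact hg1
  have hz2 : ∀ (B : PowerSeries K) (k : ℕ), 2 ≤ k → coeff 2 (B * g ^ k) = 0 := by
    intro B k hk
    have h4 : (X : PowerSeries K) ^ 3 ∣ g ^ k := by
      calc (X : PowerSeries K) ^ 3 ∣ X ^ (2 * k) := pow_dvd_pow X (by omega)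
      _ ∣ g ^ k := by rw [pow_mul]; exact pow_dvd_pow_of_dvd hX2g k
    exact X_pow_dvd_iff.mp (h4.mul_left B) 2 (by omega)
  have e2 := congrArg (coeff 2) he
  simp only [FF, map_add, map_zero] at e2
  rw [hz2 A2 2 le_rfl, hz2 A3 3 (by norm_num), hz2 A4 4 (by norm_num), coeff_mul,
    Finset.Nat.sum_antidiagonal_eq_sum_range_succ_mk] at e2
  simp only [Finset.sum_range_succ, Finset.sum_range_zero, zero_add] at e2
  norm_num [hg, hg1] at e2
  rw [← neg_div, eq_div_iff h1]
  linear_combination e2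

end Aux

/-- Let `f` be the general homogeneous quartic over a field `K` with
`a10 = 0`, `a6 = 0` and `a11 ≠ 0` (so `(0:1:0)` is a smooth point of `f = 0` with
tangent line `z = 0`). Then there is a unique formal power series `g ∈ K⟦X⟧` with
constant coefficient `0` such that `f(X, 1, g) = 0` in `K⟦X⟧`; moreover the
coefficient of `X` in `g` is `0` and the coefficient of `X^2` in `g` is `-a3/a11`. -/
theorem statement1 (K : Type*) [Field K]
    (a0 a1 a2 a3 a4 a5 a6 a7 a8 a9 a10 a11 a12 a13 a14 : K)
    (f : MvPolynomial (Fin 3) K)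
    (hf : f = MvPolynomial.C a0 * MvPolynomial.X 0 ^ 4 +
      MvPolynomial.C a1 * MvPolynomial.X 0 ^ 3 * MvPolynomial.X 1 +
      MvPolynomial.C a2 * MvPolynomial.X 0 ^ 3 * MvPolynomial.X 2 +
      MvPolynomial.C a3 * MvPolynomial.X 0 ^ 2 * MvPolynomial.X 1 ^ 2 +
      MvPolynomial.C a4 * MvPolynomial.X 0 ^ 2 * MvPolynomial.X 1 * MvPolynomial.X 2 +
      MvPolynomial.C a5 * MvPolynomial.X 0 ^ 2 * MvPolynomial.X 2 ^ 2 +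
      MvPolynomial.C a6 * MvPolynomial.X 0 * MvPolynomial.X 1 ^ 3 +
      MvPolynomial.C a7 * MvPolynomial.X 0 * MvPolynomial.X 1 ^ 2 * MvPolynomial.X 2 +
      MvPolynomial.C a8 * MvPolynomial.X 0 * MvPolynomial.X 1 * MvPolynomial.X 2 ^ 2 +
      MvPolynomial.C a9 * MvPolynomial.X 0 * MvPolynomial.X 2 ^ 3 +
      MvPolynomial.C a10 * MvPolynomial.X 1 ^ 4 +
      MvPolynomial.C a11 * MvPolynomial.X 1 ^ 3 * MvPolynomial.X 2 +
      MvPolynomial.C a12 * MvPolynomial.X 1 ^ 2 * MvPolynomial.X 2 ^ 2 +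
      MvPolynomial.C a13 * MvPolynomial.X 1 * MvPolynomial.X 2 ^ 3 +
      MvPolynomial.C a14 * MvPolynomial.X 2 ^ 4)
    (h10 : a10 = 0) (h6 : a6 = 0) (h11 : a11 ≠ 0) :
    (∃! g : PowerSeries K,
      PowerSeries.coeff 0 g = 0 ∧
      MvPolynomial.aeval ![PowerSeries.X, 1, g] f = 0) ∧
    (∀ g : PowerSeries K,
      PowerSeries.coeff 0 g = 0 →
      MvPolynomial.aeval ![PowerSeries.X, 1, g] f = 0 →
      PowerSeries.coeff 1 g = 0 ∧ PowerSeries.coeff 2 g = -(a3 / a11)) := by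
  set B0 : PowerSeries K := C a0 * X ^ 4 + C a1 * X ^ 3 + C a3 * X ^ 2 with hB0
  set B1 : PowerSeries K := C a11 + C a7 * X + C a4 * X ^ 2 + C a2 * X ^ 3 with hB1
  set B2 : PowerSeries K := C a12 + C a8 * X + C a5 * X ^ 2 with hB2
  set B3 : PowerSeries K := C a13 + C a9 * X with hB3
  set B4 : PowerSeries K := C a14 with hB4
  have hconv : ∀ g : PowerSeries K,
      MvPolynomial.aeval ![PowerSeries.X, 1, g] f = FF B0 B1 B2 B3 B4 g := by
    intro g
    rw [hf]
    simp only [map_add, map_mul, map_pow, MvPolynomial.aeval_X, MvPolynomial.aeval_C,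
      Matrix.cons_val_zero, Matrix.cons_val_one, Matrix.head_cons, Matrix.cons_val_two,
      Matrix.tail_cons, ← PowerSeries.C_eq_algebraMap, h10, h6, map_zero, FF,
      hB0, hB1, hB2, hB3, hB4]
    ring
  have hc1 : constantCoeff B1 = a11 := by
    rw [hB1]
    simp [map_add, map_mul, constantCoeff_C, constantCoeff_X]
  have h1 : constantCoeff B1 ≠ 0 := by rw [hc1]; exact h11
  have h00 : coeff 0 B0 = 0 := by
    rw [hB0]; simp [coeff_C_mul, coeff_X_pow]
  have h01 : coeff 1 B0 = 0 := by
    rw [hB0]; simp [coeff_C_mul, coeff_X_pow]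
  have h02 : coeff 2 B0 = a3 := by
    rw [hB0]; simp [coeff_C_mul, coeff_X_pow]
  constructor
  · obtain ⟨g, hg0, hge⟩ := aux_exists B0 B1 B2 B3 B4 h1 h00
    refine ⟨g, ⟨hg0, by rw [hconv g, hge]⟩, ?_⟩
    rintro g' ⟨hg0', hge'⟩
    rw [hconv g'] at hge'
    exact aux_unique B0 B1 B2 B3 B4 h1 g' g hg0' hg0 hge' hge
  · intro g hg0 hge
    rw [hconv g] at hge
    obtain ⟨hgg1, hgg2⟩ := aux_coeffs B0 B1 B2 B3 B4 h1 h01 g hg0 hge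
    exact ⟨hgg1, by rw [hgg2, h02, hc1]⟩
end

section
/- Let K be a field and let f = a0*x^4 + a1*x^3*y + a2*x^3*z + a3*x^2*y^2 + a4*x^2*y*z + a5*x^2*z^2 + a6*x*y^3 + a7*x*y^2*z + a8*x*y*z^2 + a9*x*z^3 + a10*y^4 + a11*y^3*z + a12*y^2*z^2 + a13*y*z^3 + a14*z^4 ∈ K[x,y,z] with a10 = 0, a6 = 0 and a11 ≠ 0, and let g ∈ K⟦X⟧ be a power series with constant coefficient 0 satisfying f(X, 1, g) = 0. Let c = γ1*x^3 + γ2*z^3 + β*x^2*y + γ3*x^2*z + γ4*x*z^2 + γ5*x*y*z + γ6*y^2*z + γ7*y*z^2 ∈ K[x,y,z] be a homogeneous cubic of this shape (so the coefficients of y^3 and x*y^2 are zero). Then the power series c(X, 1, g) ∈ K⟦X⟧ has zero coefficients in degrees 0 and 1, its coefficient in degree 2 equals β − γ6·(a3/a11), and hence c(X,1,g) has order at least 3 (all coefficients in degrees 0, 1, 2 vanish) if and only if β = γ6·a3/a11. -/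
set_option maxHeartbeats 1000000


/-- Let `f` be the general homogeneous quartic over a field `K` with
`a10 = 0`, `a6 = 0`, `a11 ≠ 0`, and let `g ∈ K⟦X⟧` with constant coefficient `0`
satisfy `f(X,1,g) = 0` (the local branch of the curve at `(0:1:0)`). Let
`c = γ1*x^3 + γ2*z^3 + β*x^2*y + γ3*x^2*z + γ4*x*z^2 + γ5*x*y*z + γ6*y^2*z + γ7*y*z^2`
be a cubic (coefficients of `y^3` and `x*y^2` vanish). Then `c(X,1,g)` has zero
coefficients in degrees `0` and `1`, its degree-`2` coefficient is
`β − γ6·(a3/a11)`, and all coefficients in degrees `< 3` vanish (i.e. `c(X,1,g)` has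
order at least `3`) if and only if `β = γ6·a3/a11`. -/
theorem statement2 (K : Type*) [Field K]
    (a0 a1 a2 a3 a4 a5 a6 a7 a8 a9 a10 a11 a12 a13 a14 : K)
    (f : MvPolynomial (Fin 3) K)
    (hf : f = MvPolynomial.C a0 * MvPolynomial.X 0 ^ 4 +
      MvPolynomial.C a1 * MvPolynomial.X 0 ^ 3 * MvPolynomial.X 1 +
      MvPolynomial.C a2 * MvPolynomial.X 0 ^ 3 * MvPolynomial.X 2 +
      MvPolynomial.C a3 * MvPolynomial.X 0 ^ 2 * MvPolynomial.X 1 ^ 2 +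
      MvPolynomial.C a4 * MvPolynomial.X 0 ^ 2 * MvPolynomial.X 1 * MvPolynomial.X 2 +
      MvPolynomial.C a5 * MvPolynomial.X 0 ^ 2 * MvPolynomial.X 2 ^ 2 +
      MvPolynomial.C a6 * MvPolynomial.X 0 * MvPolynomial.X 1 ^ 3 +
      MvPolynomial.C a7 * MvPolynomial.X 0 * MvPolynomial.X 1 ^ 2 * MvPolynomial.X 2 +
      MvPolynomial.C a8 * MvPolynomial.X 0 * MvPolynomial.X 1 * MvPolynomial.X 2 ^ 2 +
      MvPolynomial.C a9 * MvPolynomial.X 0 * MvPolynomial.X 2 ^ 3 +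
      MvPolynomial.C a10 * MvPolynomial.X 1 ^ 4 +
      MvPolynomial.C a11 * MvPolynomial.X 1 ^ 3 * MvPolynomial.X 2 +
      MvPolynomial.C a12 * MvPolynomial.X 1 ^ 2 * MvPolynomial.X 2 ^ 2 +
      MvPolynomial.C a13 * MvPolynomial.X 1 * MvPolynomial.X 2 ^ 3 +
      MvPolynomial.C a14 * MvPolynomial.X 2 ^ 4)
    (h10 : a10 = 0) (h6 : a6 = 0) (h11 : a11 ≠ 0)
    (g : PowerSeries K) (hg0 : PowerSeries.coeff 0 g = 0)
    (hg : MvPolynomial.aeval ![PowerSeries.X, 1, g] f = 0)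
    (β γ1 γ2 γ3 γ4 γ5 γ6 γ7 : K) (c : MvPolynomial (Fin 3) K)
    (hc : c = MvPolynomial.C γ1 * MvPolynomial.X 0 ^ 3 +
      MvPolynomial.C γ2 * MvPolynomial.X 2 ^ 3 +
      MvPolynomial.C β * MvPolynomial.X 0 ^ 2 * MvPolynomial.X 1 +
      MvPolynomial.C γ3 * MvPolynomial.X 0 ^ 2 * MvPolynomial.X 2 +
      MvPolynomial.C γ4 * MvPolynomial.X 0 * MvPolynomial.X 2 ^ 2 +
      MvPolynomial.C γ5 * MvPolynomial.X 0 * MvPolynomial.X 1 * MvPolynomial.X 2 +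
      MvPolynomial.C γ6 * MvPolynomial.X 1 ^ 2 * MvPolynomial.X 2 +
      MvPolynomial.C γ7 * MvPolynomial.X 1 * MvPolynomial.X 2 ^ 2) :
    PowerSeries.coeff 0 (MvPolynomial.aeval ![PowerSeries.X, 1, g] c) = 0 ∧
    PowerSeries.coeff 1 (MvPolynomial.aeval ![PowerSeries.X, 1, g] c) = 0 ∧
    PowerSeries.coeff 2 (MvPolynomial.aeval ![PowerSeries.X, 1, g] c) =
      β - γ6 * (a3 / a11) ∧
    ((∀ n < 3, PowerSeries.coeff n (MvPolynomial.aeval ![PowerSeries.X, 1, g] c) = 0) ↔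
      β = γ6 * a3 / a11) := by
  subst hf hc
  have hg0' : PowerSeries.constantCoeff g = 0 := by simpa using hg0
  have h1 := congrArg (PowerSeries.coeff 1) hg
  have h2 := congrArg (PowerSeries.coeff 2) hg
  simp only [map_add, map_mul, map_pow, MvPolynomial.aeval_X, MvPolynomial.aeval_C,
    Matrix.cons_val_zero, Matrix.cons_val_one, Matrix.head_cons, Matrix.cons_val_two,
    Matrix.tail_cons] at h1 h2
  simp [PowerSeries.coeff_mul, Finset.Nat.sum_antidiagonal_eq_sum_range_succ_mk,
    Finset.sum_range_succ, PowerSeries.coeff_X_pow, PowerSeries.coeff_one,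
    ← PowerSeries.C_eq_algebraMap, PowerSeries.coeff_C, hg0', h10, h6, pow_succ, pow_zero,
    one_mul] at h1 h2
  have hg1 : PowerSeries.coeff 1 g = 0 := h1.resolve_left h11
  rw [hg1] at h2
  simp only [mul_zero, add_zero, zero_mul, zero_add, mul_zero] at h2
  -- h2 : a3 + a11 * coeff 2 g = 0
  have hc0 : PowerSeries.coeff 0 (MvPolynomial.aeval ![PowerSeries.X, 1, g]
      (MvPolynomial.C γ1 * MvPolynomial.X 0 ^ 3 +
      MvPolynomial.C γ2 * MvPolynomial.X 2 ^ 3 +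
      MvPolynomial.C β * MvPolynomial.X 0 ^ 2 * MvPolynomial.X 1 +
      MvPolynomial.C γ3 * MvPolynomial.X 0 ^ 2 * MvPolynomial.X 2 +
      MvPolynomial.C γ4 * MvPolynomial.X 0 * MvPolynomial.X 2 ^ 2 +
      MvPolynomial.C γ5 * MvPolynomial.X 0 * MvPolynomial.X 1 * MvPolynomial.X 2 +
      MvPolynomial.C γ6 * MvPolynomial.X 1 ^ 2 * MvPolynomial.X 2 +
      MvPolynomial.C γ7 * MvPolynomial.X 1 * MvPolynomial.X 2 ^ 2)) = 0 := by
    simp only [map_add, map_mul, map_pow, MvPolynomial.aeval_X, MvPolynomial.aeval_C,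
      Matrix.cons_val_zero, Matrix.cons_val_one, Matrix.head_cons, Matrix.cons_val_two,
      Matrix.tail_cons]
    simp [PowerSeries.coeff_mul, Finset.Nat.sum_antidiagonal_eq_sum_range_succ_mk,
      Finset.sum_range_succ, PowerSeries.coeff_X_pow, PowerSeries.coeff_one,
      ← PowerSeries.C_eq_algebraMap, PowerSeries.coeff_C, hg0', hg1, pow_succ, pow_zero, one_mul]
  have hc1 : PowerSeries.coeff 1 (MvPolynomial.aeval ![PowerSeries.X, 1, g]
      (MvPolynomial.C γ1 * MvPolynomial.X 0 ^ 3 +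
      MvPolynomial.C γ2 * MvPolynomial.X 2 ^ 3 +
      MvPolynomial.C β * MvPolynomial.X 0 ^ 2 * MvPolynomial.X 1 +
      MvPolynomial.C γ3 * MvPolynomial.X 0 ^ 2 * MvPolynomial.X 2 +
      MvPolynomial.C γ4 * MvPolynomial.X 0 * MvPolynomial.X 2 ^ 2 +
      MvPolynomial.C γ5 * MvPolynomial.X 0 * MvPolynomial.X 1 * MvPolynomial.X 2 +
      MvPolynomial.C γ6 * MvPolynomial.X 1 ^ 2 * MvPolynomial.X 2 +
      MvPolynomial.C γ7 * MvPolynomial.X 1 * MvPolynomial.X 2 ^ 2)) = 0 := by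
    simp only [map_add, map_mul, map_pow, MvPolynomial.aeval_X, MvPolynomial.aeval_C,
      Matrix.cons_val_zero, Matrix.cons_val_one, Matrix.head_cons, Matrix.cons_val_two,
      Matrix.tail_cons]
    simp [PowerSeries.coeff_mul, Finset.Nat.sum_antidiagonal_eq_sum_range_succ_mk,
      Finset.sum_range_succ, PowerSeries.coeff_X_pow, PowerSeries.coeff_one,
      ← PowerSeries.C_eq_algebraMap, PowerSeries.coeff_C, hg0', hg1, pow_succ, pow_zero, one_mul]
  have hc2 : PowerSeries.coeff 2 (MvPolynomial.aeval ![PowerSeries.X, 1, g]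
      (MvPolynomial.C γ1 * MvPolynomial.X 0 ^ 3 +
      MvPolynomial.C γ2 * MvPolynomial.X 2 ^ 3 +
      MvPolynomial.C β * MvPolynomial.X 0 ^ 2 * MvPolynomial.X 1 +
      MvPolynomial.C γ3 * MvPolynomial.X 0 ^ 2 * MvPolynomial.X 2 +
      MvPolynomial.C γ4 * MvPolynomial.X 0 * MvPolynomial.X 2 ^ 2 +
      MvPolynomial.C γ5 * MvPolynomial.X 0 * MvPolynomial.X 1 * MvPolynomial.X 2 +
      MvPolynomial.C γ6 * MvPolynomial.X 1 ^ 2 * MvPolynomial.X 2 +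
      MvPolynomial.C γ7 * MvPolynomial.X 1 * MvPolynomial.X 2 ^ 2)) = β - γ6 * (a3 / a11) := by
    simp only [map_add, map_mul, map_pow, MvPolynomial.aeval_X, MvPolynomial.aeval_C,
      Matrix.cons_val_zero, Matrix.cons_val_one, Matrix.head_cons, Matrix.cons_val_two,
      Matrix.tail_cons]
    simp [PowerSeries.coeff_mul, Finset.Nat.sum_antidiagonal_eq_sum_range_succ_mk,
      Finset.sum_range_succ, PowerSeries.coeff_X_pow, PowerSeries.coeff_one,
      ← PowerSeries.C_eq_algebraMap, PowerSeries.coeff_C, hg0', hg1, pow_succ, pow_zero, one_mul]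
    have hg2 : PowerSeries.coeff 2 g = -(a3 / a11) := by
      field_simp
      linear_combination h2
    rw [hg2]; ring
  refine ⟨hc0, hc1, hc2, ?_⟩
  constructor
  · intro h
    have := h 2 (by norm_num)
    rw [hc2] at this
    field_simp at this ⊢
    linear_combination this
  · intro hβ n hn
    interval_cases n
    · exact hc0
    · exact hc1
    · rw [hc2, hβ]; ring
end

section
/- Let K be a field of characteristic 0 and let u ∈ K satisfy u^8 − 8u^7 + 28u^6 − 56u^5 + 52u^4 + 16u^3 − 80u^2 + 64u − 44 = 0. Define s1 = −2u, s2 = (1/108)(−u^7 + 7u^6 − 21u^5 + 35u^4 − 26u^3 − 6u^2 − 34u + 46), s3 = (1/18)(u^7 − 7u^6 + 21u^5 − 35u^4 + 26u^3 + 6u^2 − 2u + 26), s4 = (1/9)(−u^7 + 7u^6 − 21u^5 + 35u^4 − 26u^3 − 6u^2 + 20u − 26), s5 = (1/27)(2u^7 − 14u^6 + 42u^5 − 70u^4 + 52u^3 + 12u^2 − 40u + 16). Consider the polynomials in y with coefficients in K[x]: F = −y^3 − 4y + x^4 and h = −y^2 + (u·x + s1)·y + s2·x^3 + s3·x^2 +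 s4·x + s5. Then there exist a nonzero constant c ∈ K and a monic polynomial g ∈ K[x] of degree 3 such that the resultant of F and h with respect to y equals c·g^3. -/
open Polynomial

/-- The Sylvester matrix of `p` and `q`, regarded as polynomials of degree `m`
and `n` respectively: the first `n` rows contain the shifted coefficient vectors
of `p`, the last `m` rows those of `q`. -/
noncomputable def sylvesterMatrix {R : Type*} [CommRing R] (m n : ℕ) (p q : R[X]) :
    Matrix (Fin (n + m)) (Fin (n + m)) R :=
  Matrix.of fun i j =>
    if (i : ℕ) < n then
      (if (i : ℕ) ≤ (j : ℕ) ∧ (j : ℕ) ≤ (i : ℕ) + m then p.coeff (m + i - j) else 0)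
    else
      (if (i : ℕ) - n ≤ (j : ℕ) ∧ (j : ℕ) ≤ (i : ℕ) then q.coeff ((i : ℕ) - j) else 0)

/-- The resultant of `p` and `q`, regarded as polynomials of degree `m` and `n`:
the determinant of their Sylvester matrix. -/
noncomputable def resultant {R : Type*} [CommRing R] (m n : ℕ) (p q : R[X]) : R :=
  (sylvesterMatrix m n p q).det

set_option maxHeartbeats 2000000 in
theorem det5 {R : Type*} [CommRing R] (a00 a01 a02 a03 a04 a10 a11 a12 a13 a14 a20 a21 a22 a23 a24 a30 a31 a32 a33 a34 a40 a41 a42 a43 a44 : R) :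
    (!![a00, a01, a02, a03, a04;
        a10, a11, a12, a13, a14;
        a20, a21, a22, a23, a24;
        a30, a31, a32, a33, a34;
        a40, a41, a42, a43, a44] : Matrix (Fin 5) (Fin 5) R).det =
      0
      + a00*a11*a22*a33*a44
      - a00*a11*a22*a34*a43
      - a00*a11*a23*a32*a44
      + a00*a11*a23*a34*a42
      + a00*a11*a24*a32*a43
      - a00*a11*a24*a33*a42
      - a00*a12*a21*a33*a44
      + a00*a12*a21*a34*a43
      + a00*a12*a23*a31*a44
      - a00*a12*a23*a34*a41
      - a00*a12*a24*a31*a43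
      + a00*a12*a24*a33*a41
      + a00*a13*a21*a32*a44
      - a00*a13*a21*a34*a42
      - a00*a13*a22*a31*a44
      + a00*a13*a22*a34*a41
      + a00*a13*a24*a31*a42
      - a00*a13*a24*a32*a41
      - a00*a14*a21*a32*a43
      + a00*a14*a21*a33*a42
      + a00*a14*a22*a31*a43
      - a00*a14*a22*a33*a41
      - a00*a14*a23*a31*a42
      + a00*a14*a23*a32*a41
      - a01*a10*a22*a33*a44
      + a01*a10*a22*a34*a43
      + a01*a10*a23*a32*a44
      - a01*a10*a23*a34*a42
      - a01*a10*a24*a32*a43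
      + a01*a10*a24*a33*a42
      + a01*a12*a20*a33*a44
      - a01*a12*a20*a34*a43
      - a01*a12*a23*a30*a44
      + a01*a12*a23*a34*a40
      + a01*a12*a24*a30*a43
      - a01*a12*a24*a33*a40
      - a01*a13*a20*a32*a44
      + a01*a13*a20*a34*a42
      + a01*a13*a22*a30*a44
      - a01*a13*a22*a34*a40
      - a01*a13*a24*a30*a42
      + a01*a13*a24*a32*a40
      + a01*a14*a20*a32*a43
      - a01*a14*a20*a33*a42
      - a01*a14*a22*a30*a43
      + a01*a14*a22*a33*a40
      + a01*a14*a23*a30*a42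
      - a01*a14*a23*a32*a40
      + a02*a10*a21*a33*a44
      - a02*a10*a21*a34*a43
      - a02*a10*a23*a31*a44
      + a02*a10*a23*a34*a41
      + a02*a10*a24*a31*a43
      - a02*a10*a24*a33*a41
      - a02*a11*a20*a33*a44
      + a02*a11*a20*a34*a43
      + a02*a11*a23*a30*a44
      - a02*a11*a23*a34*a40
      - a02*a11*a24*a30*a43
      + a02*a11*a24*a33*a40
      + a02*a13*a20*a31*a44
      - a02*a13*a20*a34*a41
      - a02*a13*a21*a30*a44
      + a02*a13*a21*a34*a40
      + a02*a13*a24*a30*a41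
      - a02*a13*a24*a31*a40
      - a02*a14*a20*a31*a43
      + a02*a14*a20*a33*a41
      + a02*a14*a21*a30*a43
      - a02*a14*a21*a33*a40
      - a02*a14*a23*a30*a41
      + a02*a14*a23*a31*a40
      - a03*a10*a21*a32*a44
      + a03*a10*a21*a34*a42
      + a03*a10*a22*a31*a44
      - a03*a10*a22*a34*a41
      - a03*a10*a24*a31*a42
      + a03*a10*a24*a32*a41
      + a03*a11*a20*a32*a44
      - a03*a11*a20*a34*a42
      - a03*a11*a22*a30*a44
      + a03*a11*a22*a34*a40
      + a03*a11*a24*a30*a42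
      - a03*a11*a24*a32*a40
      - a03*a12*a20*a31*a44
      + a03*a12*a20*a34*a41
      + a03*a12*a21*a30*a44
      - a03*a12*a21*a34*a40
      - a03*a12*a24*a30*a41
      + a03*a12*a24*a31*a40
      + a03*a14*a20*a31*a42
      - a03*a14*a20*a32*a41
      - a03*a14*a21*a30*a42
      + a03*a14*a21*a32*a40
      + a03*a14*a22*a30*a41
      - a03*a14*a22*a31*a40
      + a04*a10*a21*a32*a43
      - a04*a10*a21*a33*a42
      - a04*a10*a22*a31*a43
      + a04*a10*a22*a33*a41
      + a04*a10*a23*a31*a42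
      - a04*a10*a23*a32*a41
      - a04*a11*a20*a32*a43
      + a04*a11*a20*a33*a42
      + a04*a11*a22*a30*a43
      - a04*a11*a22*a33*a40
      - a04*a11*a23*a30*a42
      + a04*a11*a23*a32*a40
      + a04*a12*a20*a31*a43
      - a04*a12*a20*a33*a41
      - a04*a12*a21*a30*a43
      + a04*a12*a21*a33*a40
      + a04*a12*a23*a30*a41
      - a04*a12*a23*a31*a40
      - a04*a13*a20*a31*a42
      + a04*a13*a20*a32*a41
      + a04*a13*a21*a30*a42
      - a04*a13*a21*a32*a40
      - a04*a13*a22*a30*a41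
      + a04*a13*a22*a31*a40 := by
  simp [Matrix.det_succ_row_zero, Fin.sum_univ_succ]
  simp (disch := decide) [Fin.succAbove_of_castSucc_lt, Fin.succAbove_of_le_castSucc]
  ring

set_option maxHeartbeats 4000000 in
/-- Let `K` be a field of characteristic 0 and `u ∈ K` with
`u^8 − 8u^7 + 28u^6 − 56u^5 + 52u^4 + 16u^3 − 80u^2 + 64u − 44 = 0`. With
`s1, …, s5` as defined below, for `F = −y^3 − 4y + x^4` and
`h = −y^2 + (u·x + s1)·y + s2·x^3 + s3·x^2 + s4·x + s5`, regarded as polynomials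
in `y` over `K[x]`, the resultant of `F` and `h` with respect to `y` is a nonzero
constant multiple of the cube of a monic cubic in `K[x]`. -/
theorem statement7 (K : Type*) [Field K] [CharZero K]
    (u : K)
    (hu : u ^ 8 - 8 * u ^ 7 + 28 * u ^ 6 - 56 * u ^ 5 + 52 * u ^ 4 + 16 * u ^ 3 -
      80 * u ^ 2 + 64 * u - 44 = 0)
    (s1 s2 s3 s4 s5 : K)
    (hs1 : s1 = -2 * u)
    (hs2 : s2 = (1 / 108) * (-u ^ 7 + 7 * u ^ 6 - 21 * u ^ 5 + 35 * u ^ 4 - 26 * u ^ 3 -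
      6 * u ^ 2 - 34 * u + 46))
    (hs3 : s3 = (1 / 18) * (u ^ 7 - 7 * u ^ 6 + 21 * u ^ 5 - 35 * u ^ 4 + 26 * u ^ 3 +
      6 * u ^ 2 - 2 * u + 26))
    (hs4 : s4 = (1 / 9) * (-u ^ 7 + 7 * u ^ 6 - 21 * u ^ 5 + 35 * u ^ 4 - 26 * u ^ 3 -
      6 * u ^ 2 + 20 * u - 26))
    (hs5 : s5 = (1 / 27) * (2 * u ^ 7 - 14 * u ^ 6 + 42 * u ^ 5 - 70 * u ^ 4 +
      52 * u ^ 3 + 12 * u ^ 2 - 40 * u + 16))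
    (F h : Polynomial (Polynomial K))
    (hF : F = -(X ^ 3) - C (C 4) * X + C (X ^ 4))
    (hh : h = -(X ^ 2) + C (C u * X + C s1) * X +
      C (C s2 * X ^ 3 + C s3 * X ^ 2 + C s4 * X + C s5)) :
    ∃ c : K, c ≠ 0 ∧ ∃ g : Polynomial K, g.Monic ∧ g.natDegree = 3 ∧
      resultant 3 2 F h = C c * g ^ 3 := by
  have hu' : u ^ 8 - 8 * u ^ 7 + 28 * u ^ 6 - 56 * u ^ 5 + 52 * u ^ 4 + 16 * u ^ 3 -
      80 * u ^ 2 + 64 * u - 44 = 0 := hu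
  set cv : K := (23 / 54) + (-29 / 27) * u + (157 / 108) * u ^ 2 + (-151 / 108) * u ^ 3 + (95 / 108) * u ^ 4 + (-10 / 27) * u ^ 5 + (7 / 72) * u ^ 6 + (-1 / 72) * u ^ 7 with hcv
  set av : K := (-7 / 3) + (7 / 3) * u + (-5 / 3) * u ^ 2 + (-1 / 3) * u ^ 3 + (7 / 6) * u ^ 4 + (-5 / 6) * u ^ 5 + (1 / 6) * u ^ 6 with hav
  set bv : K := (8 / 9) + (-4) * u + 4 * u ^ 2 + (-4 / 9) * u ^ 3 + (-2) * u ^ 4 + 2 * u ^ 5 + (-4 / 9) * u ^ 6 with hbv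
  set cv0 : K := (-4 / 9) + (-4 / 3) * u + (-4 / 3) * u ^ 2 + (20 / 9) * u ^ 3 + (-2 / 3) * u ^ 4 + (-2 / 3) * u ^ 5 + (2 / 9) * u ^ 6 with hcv0
  have hcvne : cv ≠ 0 := by
    intro h0
    have h1 : cv * ((-1) + (-1) * u + 9 * u ^ 2 + (-9) * u ^ 3 + (-5 / 2) * u ^ 4 + (15 / 2) * u ^ 5 + (-7 / 2) * u ^ 6 + (1 / 2) * u ^ 7) = 1 := by
      rw [hcv]
      linear_combination ((7 / 216) + (7 / 216) * u + (-13 / 144) * u ^ 2 + (7 / 54) * u ^ 3 + (-11 / 108) * u ^ 4 + (1 / 24) * u ^ 5 + (-1 / 144) * u ^ 6) * hu'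
    rw [h0, zero_mul] at h1
    exact zero_ne_one h1
  have e0 : (16 * s5 + 8 * s5 ^ 2 + s5 ^ 3 + 4 * s1 ^ 2 * s5 : K) = cv * (cv0 ^ 3) := by
    simp only [hcv, hav, hbv, hcv0, hs1, hs2, hs3, hs4, hs5]
    linear_combination ((-5608 / 19683) + (9320 / 19683) * u + (484 / 2187) * u ^ 2 + (-5912 / 6561) * u ^ 3 + (14236 / 19683) * u ^ 4 + (-64 / 243) * u ^ 5 + (-2696 / 19683) * u ^ 6 + (272 / 729) * u ^ 7 + (-2854 / 6561) * u ^ 8 + (8044 / 19683) * u ^ 9 + (-5087 / 19683) * u ^ 10 + (56 / 729) * u ^ 11 + (151 / 6561) * u ^ 12 + (-517 / 19683) * u ^ 13 + (11 / 2187) * u ^ 14 + (47 / 19683) * u ^ 15 + (-8 / 6561) * u ^ 16 + (1 / 6561) * u ^ 17) * hu'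
  have e1 : (16 * s4 + 16 * s4 * s5 + 3 * s4 * s5 ^ 2 + 4 * s1 ^ 2 * s4 + 8 * u * s1 * s5 : K) = cv * (3 * bv * cv0 ^ 2) := by
    simp only [hcv, hav, hbv, hcv0, hs1, hs2, hs3, hs4, hs5]
    linear_combination ((11464 / 6561) + (-1544 / 2187) * u + (-80 / 729) * u ^ 2 + (20308 / 6561) * u ^ 3 + (-704 / 243) * u ^ 4 + (3064 / 2187) * u ^ 5 + (7906 / 6561) * u ^ 6 + (-7450 / 2187) * u ^ 7 + (8342 / 2187) * u ^ 8 + (-16828 / 6561) * u ^ 9 + (1763 / 2187) * u ^ 10 + (154 / 729) * u ^ 11 + (-2254 / 6561) * u ^ 12 + (88 / 729) * u ^ 13 + (38 / 2187) * u ^ 14 + (-184 / 6561) * u ^ 15 + (19 / 2187) * u ^ 16 + (-2 / 2187) * u ^ 17) * hu'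
  have e2 : (8 * s4 ^ 2 + 3 * s4 ^ 2 * s5 + 16 * s3 + 16 * s3 * s5 + 3 * s3 * s5 ^ 2 + 4 * s1 ^ 2 * s3 + 8 * u * s1 * s4 + 4 * u ^ 2 * s5 : K) = cv * (3 * bv ^ 2 * cv0 + 3 * av * cv0 ^ 2) := by
    simp only [hcv, hav, hbv, hcv0, hs1, hs2, hs3, hs4, hs5]
    linear_combination ((-18038 / 6561) + (1682 / 2187) * u + (-89 / 2187) * u ^ 2 + (-37094 / 6561) * u ^ 3 + (9455 / 2187) * u ^ 4 + (674 / 729) * u ^ 5 + (-50882 / 6561) * u ^ 6 + (23060 / 2187) * u ^ 7 + (-33389 / 4374) * u ^ 8 + (16184 / 6561) * u ^ 9 + (8959 / 8748) * u ^ 10 + (-3454 / 2187) * u ^ 11 + (18443 / 26244) * u ^ 12 + (259 / 8748) * u ^ 13 + (-559 / 2916) * u ^ 14 + (2621 / 26244) * u ^ 15 + (-103 / 4374) * u ^ 16 + (19 / 8748) * u ^ 17) * hu'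
  have e3 : (s4 ^ 3 + 16 * s3 * s4 + 6 * s3 * s4 * s5 + 16 * s2 + 16 * s2 * s5 + 3 * s2 * s5 ^ 2 + 4 * s1 ^ 2 * s2 + 8 * u * s1 * s3 + 4 * u ^ 2 * s4 : K) = cv * (3 * cv0 ^ 2 + bv ^ 3 + 6 * av * bv * cv0) := by
    simp only [hcv, hav, hbv, hcv0, hs1, hs2, hs3, hs4, hs5]
    linear_combination ((43534 / 19683) + (-2278 / 6561) * u + (1081 / 6561) * u ^ 2 + (54295 / 19683) * u ^ 3 + (13280 / 6561) * u ^ 4 + (-19531 / 2187) * u ^ 5 + (524399 / 39366) * u ^ 6 + (-144191 / 13122) * u ^ 7 + (54391 / 13122) * u ^ 8 + (56185 / 39366) * u ^ 9 + (-18998 / 6561) * u ^ 10 + (19633 / 13122) * u ^ 11 + (1316 / 19683) * u ^ 12 + (-3947 / 6561) * u ^ 13 + (926 / 2187) * u ^ 14 + (-3067 / 19683) * u ^ 15 + (407 / 13122) * u ^ 16 + (-17 / 6561) * u ^ 17) * hu'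
  have e4 : (3 * s3 * s4 ^ 2 + 8 * s3 ^ 2 + 3 * s3 ^ 2 * s5 + 16 * s2 * s4 + 6 * s2 * s4 * s5 + 4 * s1 + 3 * s1 * s5 + s1 ^ 3 + 8 * u * s1 * s2 + 4 * u ^ 2 * s3 : K) = cv * (6 * bv * cv0 + 3 * av * bv ^ 2 + 3 * av ^ 2 * cv0) := by
    simp only [hcv, hav, hbv, hcv0, hs1, hs2, hs3, hs4, hs5]
    linear_combination ((-1291 / 1458) + (185 / 486) * u + (-20413 / 8748) * u ^ 2 + (20437 / 4374) * u ^ 3 + (-27667 / 2916) * u ^ 4 + (51539 / 4374) * u ^ 5 + (-41953 / 4374) * u ^ 6 + (2950 / 729) * u ^ 7 + (2309 / 1944) * u ^ 8 + (-2993 / 972) * u ^ 9 + (871 / 432) * u ^ 10 + (-835 / 4374) * u ^ 11 + (-26297 / 34992) * u ^ 12 + (8539 / 11664) * u ^ 13 + (-13087 / 34992) * u ^ 14 + (4085 / 34992) * u ^ 15 + (-61 / 2916) * u ^ 16 + (19 / 11664) * u ^ 17) * hu'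
  have e5 : (3 * s3 ^ 2 * s4 + 3 * s2 * s4 ^ 2 + 16 * s2 * s3 + 6 * s2 * s3 * s5 + 3 * s1 * s4 + 4 * u + 3 * u * s5 + 3 * u * s1 ^ 2 + 4 * u ^ 2 * s2 : K) = cv * (3 * bv ^ 2 + 6 * av * cv0 + 3 * av ^ 2 * bv) := by
    simp only [hcv, hav, hbv, hcv0, hs1, hs2, hs3, hs4, hs5]
    linear_combination ((260 / 2187) + (-3053 / 2187) * u + (1949 / 486) * u ^ 2 + (-62315 / 8748) * u ^ 3 + (74279 / 8748) * u ^ 4 + (-19825 / 2916) * u ^ 5 + (18583 / 5832) * u ^ 6 + (391 / 5832) * u ^ 7 + (-1073 / 648) * u ^ 8 + (6461 / 4374) * u ^ 9 + (-18385 / 34992) * u ^ 10 + (-463 / 1944) * u ^ 11 + (7987 / 17496) * u ^ 12 + (-719 / 2187) * u ^ 13 + (851 / 5832) * u ^ 14 + (-121 / 2916) * u ^ 15 + (1 / 144) * u ^ 16 + (-1 / 1944) * u ^ 17) * hu'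
  have e6 : (s3 ^ 3 + 6 * s2 * s3 * s4 + 8 * s2 ^ 2 + 3 * s2 ^ 2 * s5 + 3 * s1 * s3 + 3 * u * s4 + 3 * u ^ 2 * s1 : K) = cv * (3 * cv0 + 6 * av * bv + av ^ 3) := by
    simp only [hcv, hav, hbv, hcv0, hs1, hs2, hs3, hs4, hs5]
    linear_combination ((-6445 / 52488) + (82093 / 52488) * u + (-95695 / 34992) * u ^ 2 + (206359 / 52488) * u ^ 3 + (-371573 / 104976) * u ^ 4 + (11891 / 5832) * u ^ 5 + (-9053 / 17496) * u ^ 6 + (-2081 / 8748) * u ^ 7 + (8323 / 23328) * u ^ 8 + (-9689 / 52488) * u ^ 9 + (2275 / 419904) * u ^ 10 + (1439 / 17496) * u ^ 11 + (-35519 / 419904) * u ^ 12 + (21635 / 419904) * u ^ 13 + (-109 / 5184) * u ^ 14 + (263 / 46656) * u ^ 15 + (-7 / 7776) * u ^ 16 + (1 / 15552) * u ^ 17) * hu'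
  have e7 : (3 * s2 * s3 ^ 2 + 3 * s2 ^ 2 * s4 + 3 * s1 * s2 + 3 * u * s3 + u ^ 3 : K) = cv * (3 * bv + 3 * av ^ 2) := by
    simp only [hcv, hav, hbv, hcv0, hs1, hs2, hs3, hs4, hs5]
    linear_combination ((2783 / 17496) + (-12797 / 17496) * u + (10049 / 11664) * u ^ 2 + (-36019 / 34992) * u ^ 3 + (13337 / 17496) * u ^ 4 + (-1409 / 3888) * u ^ 5 + (2287 / 23328) * u ^ 6 + (-805 / 23328) * u ^ 7 + (319 / 7776) * u ^ 8 + (-2759 / 69984) * u ^ 9 + (1559 / 69984) * u ^ 10 + (-181 / 23328) * u ^ 11 + (13 / 8748) * u ^ 12 + (-1 / 8748) * u ^ 13) * hu'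
  have e8 : ((-1) + 3 * s2 ^ 2 * s3 + 3 * u * s2 : K) = cv * (3 * av) := by
    simp only [hcv, hav, hbv, hcv0, hs1, hs2, hs3, hs4, hs5]
    linear_combination ((-2201 / 34992) + (5105 / 34992) * u + (-1327 / 11664) * u ^ 2 + (266 / 2187) * u ^ 3 + (-5935 / 69984) * u ^ 4 + (353 / 7776) * u ^ 5 + (-301 / 11664) * u ^ 6 + (253 / 11664) * u ^ 7 + (-67 / 3888) * u ^ 8 + (353 / 34992) * u ^ 9 + (-143 / 34992) * u ^ 10 + (13 / 11664) * u ^ 11 + (-13 / 69984) * u ^ 12 + (1 / 69984) * u ^ 13) * hu'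
  have e9 : (s2 ^ 3 : K) = cv * (1) := by
    simp only [hcv, hav, hbv, hcv0, hs1, hs2, hs3, hs4, hs5]
    linear_combination ((4991 / 629856) + (-5663 / 629856) * u + (353 / 104976) * u ^ 2 + (-785 / 157464) * u ^ 3 + (5791 / 1259712) * u ^ 4 + (-407 / 139968) * u ^ 5 + (349 / 209952) * u ^ 6 + (-259 / 209952) * u ^ 7 + (67 / 69984) * u ^ 8 + (-353 / 629856) * u ^ 9 + (143 / 629856) * u ^ 10 + (-13 / 209952) * u ^ 11 + (13 / 1259712) * u ^ 12 + (-1 / 1259712) * u ^ 13) * hu'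
  have hC4 : ∀ (p : K[X]) (k n : ℕ), ((C p) ^ k : K[X][X]).coeff n = if n = 0 then p ^ k else 0 := by
    intro p k n; rw [← map_pow, coeff_C]
  have hM : sylvesterMatrix 3 2 F h =
      !![-1, 0, -C 4, X ^ 4, 0;
         0, -1, 0, -C 4, X ^ 4;
         -1, C u * X + C s1, C s2 * X ^ 3 + C s3 * X ^ 2 + C s4 * X + C s5, 0, 0;
         0, -1, C u * X + C s1, C s2 * X ^ 3 + C s3 * X ^ 2 + C s4 * X + C s5, 0;
         0, 0, -1, C u * X + C s1, C s2 * X ^ 3 + C s3 * X ^ 2 + C s4 * X + C s5] := by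
    subst hF hh
    refine Matrix.ext fun i j => ?_
    fin_cases i <;> fin_cases j <;>
      norm_num [sylvesterMatrix, Matrix.of_apply, coeff_sub, coeff_add, coeff_neg,
        coeff_C_mul, coeff_X_pow, coeff_X, coeff_C, hC4, Fin.ext_iff]
  have key : (C (16 * s5 + 8 * s5 ^ 2 + s5 ^ 3 + 4 * s1 ^ 2 * s5 : K) +
      C (16 * s4 + 16 * s4 * s5 + 3 * s4 * s5 ^ 2 + 4 * s1 ^ 2 * s4 + 8 * u * s1 * s5 : K) * X ^ 1 +
      C (8 * s4 ^ 2 + 3 * s4 ^ 2 * s5 + 16 * s3 + 16 * s3 * s5 + 3 * s3 * s5 ^ 2 + 4 * s1 ^ 2 * s3 + 8 * u * s1 * s4 + 4 * u ^ 2 * s5 : K) * X ^ 2 +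
      C (s4 ^ 3 + 16 * s3 * s4 + 6 * s3 * s4 * s5 + 16 * s2 + 16 * s2 * s5 + 3 * s2 * s5 ^ 2 + 4 * s1 ^ 2 * s2 + 8 * u * s1 * s3 + 4 * u ^ 2 * s4 : K) * X ^ 3 +
      C (3 * s3 * s4 ^ 2 + 8 * s3 ^ 2 + 3 * s3 ^ 2 * s5 + 16 * s2 * s4 + 6 * s2 * s4 * s5 + 4 * s1 + 3 * s1 * s5 + s1 ^ 3 + 8 * u * s1 * s2 + 4 * u ^ 2 * s3 : K) * X ^ 4 +
      C (3 * s3 ^ 2 * s4 + 3 * s2 * s4 ^ 2 + 16 * s2 * s3 + 6 * s2 * s3 * s5 + 3 * s1 * s4 + 4 * u + 3 * u * s5 + 3 * u * s1 ^ 2 + 4 * u ^ 2 * s2 : K) * X ^ 5 +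
      C (s3 ^ 3 + 6 * s2 * s3 * s4 + 8 * s2 ^ 2 + 3 * s2 ^ 2 * s5 + 3 * s1 * s3 + 3 * u * s4 + 3 * u ^ 2 * s1 : K) * X ^ 6 +
      C (3 * s2 * s3 ^ 2 + 3 * s2 ^ 2 * s4 + 3 * s1 * s2 + 3 * u * s3 + u ^ 3 : K) * X ^ 7 +
      C ((-1) + 3 * s2 ^ 2 * s3 + 3 * u * s2 : K) * X ^ 8 +
      C (s2 ^ 3 : K) * X ^ 9 : K[X]) =
      C cv * (X ^ 3 + C av * X ^ 2 + C bv * X + C cv0) ^ 3 := by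
    rw [e0, e1, e2, e3, e4, e5, e6, e7, e8, e9]
    have expand : (C (cv * (cv0 ^ 3)) +
        C (cv * (3 * bv * cv0 ^ 2)) * X ^ 1 +
        C (cv * (3 * bv ^ 2 * cv0 + 3 * av * cv0 ^ 2)) * X ^ 2 +
        C (cv * (3 * cv0 ^ 2 + bv ^ 3 + 6 * av * bv * cv0)) * X ^ 3 +
        C (cv * (6 * bv * cv0 + 3 * av * bv ^ 2 + 3 * av ^ 2 * cv0)) * X ^ 4 +
        C (cv * (3 * bv ^ 2 + 6 * av * cv0 + 3 * av ^ 2 * bv)) * X ^ 5 +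
        C (cv * (3 * cv0 + 6 * av * bv + av ^ 3)) * X ^ 6 +
        C (cv * (3 * bv + 3 * av ^ 2)) * X ^ 7 +
        C (cv * (3 * av)) * X ^ 8 +
        C (cv * (1)) * X ^ 9 : K[X]) =
        C cv * (X ^ 3 + C av * X ^ 2 + C bv * X + C cv0) ^ 3 := by
      simp only [map_add, map_mul, map_pow, map_one, map_ofNat, C_1]
      ring
    exact expand
  refine ⟨cv, hcvne, X ^ 3 + C av * X ^ 2 + C bv * X + C cv0, ?_, ?_, ?_⟩
  · monicity!
  · compute_degree!
  · rw [_root_.resultant, hM, det5, ← key]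
    simp only [map_add, map_mul, map_pow, map_one, map_neg, map_ofNat, C_1]
    ring
end
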